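/- Let H be a subgroup of a finite group G and N a normal subgroup of G. Then HN is K-P_t-subnormal in G if and only if HN/N is K-P_t-subnormal in G/N. -/

import Mathlib

/-- One step of a `K`-`ℙ_t`-subnormal chain: `A ≤ B` and either `A` is normal in `B`,
or the index `|B : A|` is a prime `p` such that `p - 1` is not divisible by the
`(t+1)`-th power of any prime. -/
def KPtStep (t : ℕ) {G : Type*} [Group G] (A B : Subgroup G) : Prop :=
  A ≤ B ∧ ((A.subgroupOf B).Normal ∨
    ∃ p : ℕ, p.Prime ∧ A.relIndex B = p ∧ ∀ q : ℕ, q.Prime → ¬ q ^ (t + 1) ∣ (p - 1))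

/-- `H` is `K`-`ℙ_t`-subnormal in `G` if there is a chain
`H = H₀ ≤ H₁ ≤ ⋯ ≤ Hₙ = G` each step of which is a `KPtStep`. -/
def KPtSubnormal (t : ℕ) {G : Type*} [Group G] (H : Subgroup G) : Prop :=
  Relation.ReflTransGen (KPtStep t) H ⊤

lemma KPtStep.map {t : ℕ} {G G' : Type*} [Group G] [Group G'] {f : G →* G'}
    (hf : Function.Surjective f) {A B : Subgroup G} (hker : f.ker ≤ A)
    (h : KPtStep t A B) : KPtStep t (A.map f) (B.map f) := by
  obtain ⟨hle, h⟩ := h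
  refine ⟨Subgroup.map_mono hle, ?_⟩
  rcases h with hnorm | ⟨p, hp, hrel, hdvd⟩
  · left
    rw [Subgroup.normal_subgroupOf_iff (Subgroup.map_mono hle)]
    rintro _ _ ⟨a, ha, rfl⟩ ⟨b, hb, rfl⟩
    refine ⟨b * a * b⁻¹, ?_, by simp⟩
    exact (Subgroup.normal_subgroupOf_iff hle).mp hnorm a b ha hb
  · right
    refine ⟨p, hp, ?_, hdvd⟩
    have : (A.map f).relIndex (B.map f) = A.relIndex B := by
      conv_rhs => rw [← Subgroup.comap_map_eq_self (f := f) hker]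
      rw [Subgroup.relIndex_comap]
    rw [this, hrel]

lemma KPtStep.comap {t : ℕ} {G G' : Type*} [Group G] [Group G'] {f : G →* G'}
    (hf : Function.Surjective f) {A B : Subgroup G'}
    (h : KPtStep t A B) : KPtStep t (A.comap f) (B.comap f) := by
  obtain ⟨hle, h⟩ := h
  refine ⟨Subgroup.comap_mono hle, ?_⟩
  rcases h with hnorm | ⟨p, hp, hrel, hdvd⟩
  · left
    rw [Subgroup.normal_subgroupOf_iff (Subgroup.comap_mono hle)]
    intro a b ha hb
    simp only [Subgroup.mem_comap, map_mul, map_inv] at *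
    exact (Subgroup.normal_subgroupOf_iff hle).mp hnorm (f a) (f b) ha hb
  · right
    refine ⟨p, hp, ?_, hdvd⟩
    rw [Subgroup.relIndex_comap, Subgroup.map_comap_eq_self_of_surjective hf, hrel]

lemma kptReflTransGen_le {t : ℕ} {G : Type*} [Group G] {A B : Subgroup G}
    (h : Relation.ReflTransGen (KPtStep t) A B) : A ≤ B := by
  induction h with
  | refl => exact le_rfl
  | tail _ h2 ih => exact le_trans ih h2.1

lemma KPtStep.le {t : ℕ} {G : Type*} [Group G] {A B : Subgroup G}
    (h : KPtStep t A B) : A ≤ B := h.1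

theorem stmt_5 {G : Type*} [Group G] [Finite G] (t : ℕ) (ht : 1 ≤ t)
    (H N : Subgroup G) [N.Normal] :
    KPtSubnormal t (H ⊔ N) ↔ KPtSubnormal t ((H ⊔ N).map (QuotientGroup.mk' N)) := by
  have hsurj : Function.Surjective (QuotientGroup.mk' N) := QuotientGroup.mk'_surjective N
  have hker : (QuotientGroup.mk' N).ker = N := QuotientGroup.ker_mk' N
  constructor
  · intro hc
    have key : ∀ A B : Subgroup G, Relation.ReflTransGen (KPtStep t) A B → N ≤ A →
        Relation.ReflTransGen (KPtStep t) (A.map (QuotientGroup.mk' N))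
          (B.map (QuotientGroup.mk' N)) := by
      intro A B hAB
      induction hAB with
      | refl => intro _; exact Relation.ReflTransGen.refl
      | @tail b c hab hbc ih =>
        intro hNA
        have hNb : N ≤ b := le_trans hNA (kptReflTransGen_le hab)
        exact (ih hNA).tail (hbc.map hsurj (hker.le.trans hNb))
    have := key (H ⊔ N) ⊤ hc le_sup_right
    rwa [Subgroup.map_top_of_surjective _ hsurj] at this
  · intro hc
    have key : ∀ A B : Subgroup (G ⧸ N), Relation.ReflTransGen (KPtStep t) A B →
        Relation.ReflTransGen (KPtStep t) (A.comap (QuotientGroup.mk' N))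
          (B.comap (QuotientGroup.mk' N)) := by
      intro A B hAB
      induction hAB with
      | refl => exact Relation.ReflTransGen.refl
      | tail _ hbc ih => exact ih.tail (hbc.comap hsurj)
    have := key _ ⊤ hc
    rwa [Subgroup.comap_map_eq_self (hker.le.trans le_sup_right), Subgroup.comap_top] at this
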